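/- With F_λ(α, θ) = b^{−λ} Σ_{0 ≤ n < b^λ} e(α R_λ(n) − θ n), for any reals α, θ, θ' and any integer λ ≥ 0, one has ||F_λ(α, θ)|² − |F_λ(α, θ')|²| ≤ (2π/3) b^λ ‖θ − θ'‖, where ‖·‖ denotes distance to the nearest integer. -/

import Mathlib

/-- The `j`-th digit of `n` in base `b`. -/
def digit (b n j : ℕ) : ℕ := n / b ^ j % b

/-- The reverse of the `L` first digits of `n` in base `b`. -/
def rev (b L n : ℕ) : ℕ := ∑ j ∈ Finset.range L, digit b n j * b ^ (L - 1 - j)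

/-- The exponential sum `F_λ(α,θ) = b^{-λ} ∑_{0 ≤ n < b^λ} e(α R_λ(n) - θ n)`. -/
noncomputable def Fl (b L : ℕ) (α θ : ℝ) : ℂ :=
  (1 / (b : ℂ) ^ L) * ∑ n ∈ Finset.range (b ^ L),
    Complex.exp (2 * Real.pi * Complex.I * ((α * (rev b L n : ℝ) - θ * n : ℝ) : ℂ))

/-- Distance from a real number to the nearest integer. -/
noncomputable def nint (x : ℝ) : ℝ := |x - round x|

/-- The unnormalized exponential sum. -/
noncomputable def Sl (b L : ℕ) (α θ : ℝ) : ℂ :=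
  ∑ n ∈ Finset.range (b ^ L),
    Complex.exp (2 * Real.pi * Complex.I * ((α * (rev b L n : ℝ) - θ * n : ℝ) : ℂ))

lemma nint_nonneg (x : ℝ) : 0 ≤ nint x := abs_nonneg _

lemma nint_le (x : ℝ) (z : ℤ) : nint x ≤ |x - z| := round_le x z

lemma nint_neg (x : ℝ) : nint (-x) = nint x := by
  have h1 : ∀ y : ℝ, nint (-y) ≤ nint y := by
    intro y
    calc nint (-y) ≤ |(-y) - ((-round y : ℤ) : ℝ)| := nint_le _ _
      _ = nint y := by unfold nint; push_cast; rw [← abs_neg]; ring_nf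
  refine le_antisymm (h1 x) ?_
  have := h1 (-x); rwa [neg_neg] at this

lemma nint_int_mul (k : ℤ) (x : ℝ) : nint ((k : ℝ) * x) ≤ |(k : ℝ)| * nint x := by
  calc nint ((k : ℝ) * x) ≤ |(k : ℝ) * x - ((k * round x : ℤ) : ℝ)| := nint_le _ _
    _ = |(k : ℝ)| * nint x := by
        push_cast; rw [← mul_sub, abs_mul]; rfl

lemma sin_le_nint (x : ℝ) : |Real.sin (Real.pi * x)| ≤ Real.pi * nint x := by
  have h1 : |Real.sin (Real.pi * x)| = |Real.sin (Real.pi * (x - round x))| := by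
    rw [mul_sub, mul_comm Real.pi ((round x : ℝ)), Real.sin_sub_int_mul_pi]
    rw [abs_mul]
    have : |((-1:ℝ)) ^ round x| = 1 := by
      rcases Int.even_or_odd (round x) with h | h
      · rw [h.neg_one_zpow]; simp
      · rw [Odd.neg_one_zpow h]; simp
    rw [this, one_mul]
  rw [h1]
  calc |Real.sin (Real.pi * (x - round x))| ≤ |Real.pi * (x - round x)| := Real.abs_sin_le_abs
    _ = Real.pi * nint x := by rw [abs_mul, abs_of_nonneg Real.pi_pos.le]; rfl

open Complex in
lemma abs_exp_sub_one (x : ℝ) :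
    ‖Complex.exp (2 * Real.pi * Complex.I * (x : ℂ)) - 1‖ ≤ 2 * Real.pi * nint x := by
  have key : Complex.exp (2 * Real.pi * Complex.I * (x : ℂ)) - 1
      = Complex.exp (((Real.pi * x : ℝ) : ℂ) * I) * (2 * Complex.sin ((Real.pi * x : ℝ) : ℂ) * I) := by
    have h1 : (2 * (Real.pi : ℂ) * I * (x : ℂ)) = ((2 * Real.pi * x : ℝ) : ℂ) * I := by
      push_cast; ring
    rw [h1, Complex.exp_mul_I, Complex.exp_mul_I]
    have h2 : ((2 * Real.pi * x : ℝ) : ℂ) = 2 * ((Real.pi * x : ℝ) : ℂ) := by push_cast; ring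
    rw [h2, Complex.cos_two_mul, Complex.sin_two_mul]
    have hsc := Complex.sin_sq_add_cos_sq (((Real.pi * x : ℝ) : ℂ))
    linear_combination (2 : ℂ) * hsc - 2 * Complex.sin ((Real.pi * x : ℝ) : ℂ)^2 * Complex.I_sq
  rw [key, norm_mul, norm_mul, norm_mul]
  rw [Complex.norm_exp, Complex.norm_I]
  simp only [Complex.mul_re, Complex.ofReal_re, Complex.ofReal_im, Complex.I_re, Complex.I_im]
  rw [← Complex.ofReal_sin, Complex.norm_real, Real.norm_eq_abs]
  simp only [mul_zero, zero_mul, sub_zero, Real.exp_zero, one_mul, mul_one]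
  have := sin_le_nint x
  have h2 : ‖(2:ℂ)‖ = 2 := by norm_num
  rw [h2]
  nlinarith [Real.pi_pos, nint x, abs_nonneg (Real.sin (Real.pi * x))]

open Complex in
lemma abs_exp_sub_exp (u v : ℝ) :
    ‖Complex.exp (2 * Real.pi * Complex.I * (u : ℂ))
        - Complex.exp (2 * Real.pi * Complex.I * (v : ℂ))‖
      ≤ 2 * Real.pi * nint (u - v) := by
  have key : Complex.exp (2 * Real.pi * Complex.I * (u : ℂ))
        - Complex.exp (2 * Real.pi * Complex.I * (v : ℂ))
      = Complex.exp (2 * Real.pi * Complex.I * (v : ℂ))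
        * (Complex.exp (2 * Real.pi * Complex.I * ((u - v : ℝ) : ℂ)) - 1) := by
    rw [mul_sub, mul_one, ← Complex.exp_add]
    congr 1
    push_cast; ring
  rw [key, norm_mul]
  have h1 : ‖Complex.exp (2 * Real.pi * Complex.I * (v : ℂ))‖ = 1 := by
    rw [Complex.norm_exp]
    have : (2 * (Real.pi:ℂ) * I * (v:ℂ)).re = 0 := by
      simp [Complex.mul_re, Complex.mul_im]
    rw [this, Real.exp_zero]
  rw [h1, one_mul]
  exact abs_exp_sub_one _

open Complex in
lemma exp_mul_conj (u v : ℝ) :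
    Complex.exp (2 * Real.pi * Complex.I * (u : ℂ))
        * (starRingEnd ℂ) (Complex.exp (2 * Real.pi * Complex.I * (v : ℂ)))
      = Complex.exp (2 * Real.pi * Complex.I * ((u - v : ℝ) : ℂ)) := by
  rw [← Complex.exp_conj, ← Complex.exp_add]
  congr 1
  simp only [map_mul, Complex.conj_I, Complex.conj_ofReal, map_ofNat]
  push_cast; ring

lemma sum_cast_id (N : ℕ) : ∑ k ∈ Finset.range N, (k : ℝ) = N * (N - 1) / 2 := by
  induction N with
  | zero => simp
  | succ n ih => rw [Finset.sum_range_succ, ih]; push_cast; ring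

lemma sum_dist (N : ℕ) : ∑ k ∈ Finset.range N, |(N : ℝ) - k| = N * (N + 1) / 2 := by
  have h : ∀ k ∈ Finset.range N, |(N : ℝ) - k| = (N : ℝ) - k := by
    intro k hk
    exact abs_of_nonneg (by
      have : (k : ℝ) ≤ N := by exact_mod_cast (Finset.mem_range.mp hk).le
      linarith)
  rw [Finset.sum_congr rfl h, Finset.sum_sub_distrib, sum_cast_id, Finset.sum_const,
    Finset.card_range, nsmul_eq_mul]
  ring

lemma sum_sum_abs (N : ℕ) :
    ∑ m ∈ Finset.range N, ∑ n ∈ Finset.range N, |(m : ℝ) - n| = ((N:ℝ)^3 - N) / 3 := by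
  induction N with
  | zero => simp
  | succ N ih =>
    have h1 : ∀ m : ℕ, ∑ n ∈ Finset.range (N+1), |(m:ℝ) - n|
        = (∑ n ∈ Finset.range N, |(m:ℝ) - n|) + |(m:ℝ) - N| := fun m => Finset.sum_range_succ _ _
    rw [Finset.sum_range_succ]
    simp_rw [h1]
    rw [Finset.sum_add_distrib, ih]
    have h2 : ∑ m ∈ Finset.range N, |(m:ℝ) - N| = N * (N + 1) / 2 := by
      rw [← sum_dist N]
      exact Finset.sum_congr rfl fun m _ => by rw [abs_sub_comm]
    have h3 : ∑ n ∈ Finset.range N, |(N:ℝ) - n| = N * (N + 1) / 2 := sum_dist N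
    rw [h2, h3]
    simp only [sub_self, abs_zero, add_zero]
    push_cast
    ring

theorem stmt15 (b L : ℕ) (hb : 2 ≤ b) (α θ θ' : ℝ) :
    |‖Fl b L α θ‖ ^ 2 - ‖Fl b L α θ'‖ ^ 2|
      ≤ (2 * Real.pi / 3) * (b : ℝ) ^ L * nint (θ - θ') := by
  have hπ := Real.pi_pos
  set N := b ^ L with hN
  have hNpos : 0 < N := pow_pos (by omega) L
  have hn1 : (1:ℝ) ≤ (N:ℝ) := by exact_mod_cast hNpos
  set φ : ℝ → ℕ → ℝ := fun t n => α * (rev b L n : ℝ) - t * n with hφ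
  have hS : ∀ t, Sl b L α t
      = ∑ n ∈ Finset.range N, Complex.exp (2 * Real.pi * Complex.I * ((φ t n : ℝ) : ℂ)) :=
    fun t => rfl
  have hprod : ∀ t : ℝ, Sl b L α t * (starRingEnd ℂ) (Sl b L α t)
      = ∑ m ∈ Finset.range N, ∑ n ∈ Finset.range N,
          Complex.exp (2 * Real.pi * Complex.I * ((φ t m - φ t n : ℝ) : ℂ)) := by
    intro t
    rw [hS, map_sum, Finset.sum_mul_sum]
    exact Finset.sum_congr rfl fun m _ => Finset.sum_congr rfl fun n _ => exp_mul_conj _ _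
  have hre : ∀ t : ℝ, (Complex.normSq (Sl b L α t) : ℝ)
      = (Sl b L α t * (starRingEnd ℂ) (Sl b L α t)).re := by
    intro t; rw [Complex.mul_conj]; simp
  -- numerator bound
  have hdiff : |Complex.normSq (Sl b L α θ) - Complex.normSq (Sl b L α θ')|
      ≤ 2 * Real.pi * nint (θ - θ') * (((N:ℝ)^3 - N) / 3) := by
    rw [hre, hre, ← Complex.sub_re]
    calc |(Sl b L α θ * (starRingEnd ℂ) (Sl b L α θ)
            - Sl b L α θ' * (starRingEnd ℂ) (Sl b L α θ')).re|
        ≤ ‖Sl b L α θ * (starRingEnd ℂ) (Sl b L α θ)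
            - Sl b L α θ' * (starRingEnd ℂ) (Sl b L α θ')‖ := Complex.abs_re_le_norm _
      _ = ‖∑ m ∈ Finset.range N, ∑ n ∈ Finset.range N,
            (Complex.exp (2 * Real.pi * Complex.I * ((φ θ m - φ θ n : ℝ) : ℂ))
              - Complex.exp (2 * Real.pi * Complex.I * ((φ θ' m - φ θ' n : ℝ) : ℂ)))‖ := by
          rw [hprod, hprod, ← Finset.sum_sub_distrib]
          congr 1
          exact Finset.sum_congr rfl fun m _ => (Finset.sum_sub_distrib _ _).symm
      _ ≤ ∑ m ∈ Finset.range N, ∑ n ∈ Finset.range N,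
            ‖Complex.exp (2 * Real.pi * Complex.I * ((φ θ m - φ θ n : ℝ) : ℂ))
              - Complex.exp (2 * Real.pi * Complex.I * ((φ θ' m - φ θ' n : ℝ) : ℂ))‖ := by
          refine le_trans (norm_sum_le _ _) ?_
          exact Finset.sum_le_sum fun m _ => norm_sum_le _ _
      _ ≤ ∑ m ∈ Finset.range N, ∑ n ∈ Finset.range N,
            2 * Real.pi * (|(m:ℝ) - n| * nint (θ - θ')) := by
          refine Finset.sum_le_sum fun m _ => Finset.sum_le_sum fun n _ => ?_
          refine le_trans (abs_exp_sub_exp _ _) ?_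
          have harg : (φ θ m - φ θ n) - (φ θ' m - φ θ' n)
              = (((m:ℤ) - (n:ℤ) : ℤ) : ℝ) * (θ' - θ) := by
            simp only [hφ]; push_cast; ring
          rw [harg]
          have h1 := nint_int_mul ((m:ℤ) - (n:ℤ)) (θ' - θ)
          have h2 : nint (θ' - θ) = nint (θ - θ') := by
            rw [show θ' - θ = -(θ - θ') by ring, nint_neg]
          have h3 : |(((m:ℤ) - (n:ℤ) : ℤ) : ℝ)| = |(m:ℝ) - n| := by push_cast; rfl
          rw [h2, h3] at h1
          nlinarith [Real.pi_pos]
      _ = 2 * Real.pi * nint (θ - θ') * (((N:ℝ)^3 - N) / 3) := by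
          rw [← sum_sum_abs N, Finset.mul_sum]
          refine Finset.sum_congr rfl fun m _ => ?_
          rw [Finset.mul_sum]
          exact Finset.sum_congr rfl fun n _ => by ring
  -- express |Fl|² via normSq Sl
  have habs2 : ∀ t : ℝ, ‖Fl b L α t‖ ^ 2
      = Complex.normSq (Sl b L α t) / ((N:ℝ))^2 := by
    intro t
    have hFl : Fl b L α t = (1 / (b : ℂ) ^ L) * Sl b L α t := rfl
    rw [hFl, norm_mul, mul_pow, Complex.sq_norm (Sl b L α t)]
    have : ‖(1 / (b : ℂ) ^ L)‖ = 1 / (N:ℝ) := by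
      rw [norm_div, norm_one, norm_pow, Complex.norm_natCast]
      push_cast [hN]; ring_nf
    rw [this]
    have hne : ((N:ℝ)) ≠ 0 := by positivity
    field_simp
  rw [habs2, habs2, div_sub_div_same, abs_div, abs_of_nonneg (by positivity : (0:ℝ) ≤ ((N:ℝ))^2)]
  have hbL : ((b:ℝ)) ^ L = (N:ℝ) := by rw [hN]; push_cast; ring
  rw [hbL]
  rw [div_le_iff₀ (by positivity)]
  calc |Complex.normSq (Sl b L α θ) - Complex.normSq (Sl b L α θ')|
      ≤ 2 * Real.pi * nint (θ - θ') * (((N:ℝ)^3 - N) / 3) := hdiff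
    _ ≤ 2 * Real.pi / 3 * (N:ℝ) * nint (θ - θ') * ((N:ℝ))^2 := by
        nlinarith [mul_nonneg (mul_nonneg Real.pi_pos.le (nint_nonneg (θ - θ')))
          (by linarith : (0:ℝ) ≤ (N:ℝ)), nint_nonneg (θ - θ'), Real.pi_pos, hn1]
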